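/- Let M be a compact metric space, and for i = 1, 2 let m_i be finite nonatomic Borel measures on M and K_i : M × M → ℝ continuous kernels. Define (L_i f)(x) = ∫ K_i(x,y)·(f(x) − f(y)) dm_i(y) for f ∈ C(M). If L₁ = L₂ as operators on C(M), then for every x ∈ M the measures K₁(x,·)·m₁ and K₂(x,·)·m₂ are equal. -/

import Mathlib

open MeasureTheory
open scoped NNReal ENNReal

section stmt7aux
variable {M : Type*} [MetricSpace M] [CompactSpace M] [MeasurableSpace M] [BorelSpace M]

lemma stmt7_integrable (m : Measure M) [IsFiniteMeasure m] {k : M → ℝ} (hk : Continuous k) :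
    Integrable k m :=
  hk.integrable_of_hasCompactSupport (HasCompactSupport.of_compactSpace _)

lemma stmt7_expand (m : Measure M) [IsFiniteMeasure m] (k f : M → ℝ)
    (hk : Continuous k) (hf : Continuous f) (c : ℝ) :
    ∫ y, k y * (c - f y) ∂m = c * (∫ y, k y ∂m) - ∫ y, k y * f y ∂m := by
  have ik : Integrable k m := stmt7_integrable m hk
  have ikf : Integrable (fun y => k y * f y) m := stmt7_integrable m (hk.mul hf)
  simp_rw [mul_sub]
  rw [integral_sub (ik.mul_const c) ikf, integral_mul_const]
  ring

lemma stmt7_fin (m : Measure M) [IsFiniteMeasure m] {k : M → ℝ} (hk : Continuous k) :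
    IsFiniteMeasure (m.withDensity fun y => ENNReal.ofReal (k y)) :=
  isFiniteMeasure_withDensity (stmt7_integrable m hk).lintegral_lt_top.ne

lemma stmt7_withDensity_integral (m : Measure M) [IsFiniteMeasure m] {k : M → ℝ}
    (hk : Continuous k) (g : M → ℝ) :
    ∫ y, g y ∂(m.withDensity fun y => ENNReal.ofReal (k y))
      = ∫ y, max (k y) 0 * g y ∂m := by
  have hm : Measurable fun y => (k y).toNNReal := (continuous_real_toNNReal.comp hk).measurable
  have h1 : (fun y => ENNReal.ofReal (k y))
      = fun y => (((k y).toNNReal : ℝ≥0) : ℝ≥0∞) := rfl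
  rw [h1, integral_withDensity_eq_integral_smul hm g]
  refine integral_congr_ae (Filter.Eventually.of_forall fun y => ?_)
  simp [NNReal.smul_def, Real.coe_toNNReal']

lemma stmt7_cancel {A B C D E : ℝ≥0∞} (hA : A ≠ ⊤) (hB : B ≠ ⊤) (hC : C ≠ ⊤) (hD : D ≠ ⊤)
    (hE : E ≠ ⊤) (h : A + D + E = B + C + E) :
    A.toReal - C.toReal = B.toReal - D.toReal := by
  have h' := congrArg ENNReal.toReal h
  rw [ENNReal.toReal_add (ENNReal.add_ne_top.mpr ⟨hA, hD⟩) hE,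
      ENNReal.toReal_add hA hD,
      ENNReal.toReal_add (ENNReal.add_ne_top.mpr ⟨hB, hC⟩) hE,
      ENNReal.toReal_add hB hC] at h'
  linarith

end stmt7aux

/-- Step 1 of the identifiability proofs: if the two unnormalized graph
Laplace operators built from continuous kernels `Kᵢ` and finite nonatomic measures `mᵢ`
coincide on `C(M)`, then for every `x` the weighted (signed) measures `K₁(x,·)·m₁` and
`K₂(x,·)·m₂` coincide. -/
theorem stmt_7 {M : Type*} [MetricSpace M] [CompactSpace M]
    [MeasurableSpace M] [BorelSpace M]
    (m₁ m₂ : Measure M) [IsFiniteMeasure m₁] [IsFiniteMeasure m₂]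
    [NullSingletonClass m₁] [NullSingletonClass m₂]
    (K₁ K₂ : M × M → ℝ) (hK₁ : Continuous K₁) (hK₂ : Continuous K₂)
    (h : ∀ f : C(M, ℝ), ∀ x : M,
      ∫ y, K₁ (x, y) * (f x - f y) ∂m₁ = ∫ y, K₂ (x, y) * (f x - f y) ∂m₂) :
    ∀ x : M,
      m₁.withDensityᵥ (fun y => K₁ (x, y)) = m₂.withDensityᵥ (fun y => K₂ (x, y)) := by
  intro x
  have hk₁ : Continuous fun y => K₁ (x, y) := hK₁.comp (Continuous.prodMk_right x)
  have hk₂ : Continuous fun y => K₂ (x, y) := hK₂.comp (Continuous.prodMk_right x)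
  have ik₁ : Integrable (fun y => K₁ (x, y)) m₁ := stmt7_integrable m₁ hk₁
  have ik₂ : Integrable (fun y => K₂ (x, y)) m₂ := stmt7_integrable m₂ hk₂
  set a : ℝ := (∫ y, K₁ (x, y) ∂m₁) - ∫ y, K₂ (x, y) ∂m₂ with ha
  -- Step A: the operator identity rearranged
  have hA : ∀ f : C(M, ℝ),
      (∫ y, K₁ (x, y) * f y ∂m₁) - (∫ y, K₂ (x, y) * f y ∂m₂) = f x * a := by
    intro f
    have e1 : ∫ y, K₁ (x, y) * (f x - f y) ∂m₁
        = f x * (∫ y, K₁ (x, y) ∂m₁) - ∫ y, K₁ (x, y) * f y ∂m₁ :=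
      stmt7_expand m₁ (fun y => K₁ (x, y)) f hk₁ f.continuous (f x)
    have e2 : ∫ y, K₂ (x, y) * (f x - f y) ∂m₂
        = f x * (∫ y, K₂ (x, y) ∂m₂) - ∫ y, K₂ (x, y) * f y ∂m₂ :=
      stmt7_expand m₂ (fun y => K₂ (x, y)) f hk₂ f.continuous (f x)
    have e3 : f x * a = f x * (∫ y, K₁ (x, y) ∂m₁) - f x * (∫ y, K₂ (x, y) ∂m₂) := by
      rw [ha, mul_sub]
    linarith [h f x, e1, e2, e3]
  -- the two positive measures
  haveI fin1 : IsFiniteMeasure (m₁.withDensity fun y => ENNReal.ofReal (K₁ (x, y))) :=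
    stmt7_fin m₁ hk₁
  haveI fin2 : IsFiniteMeasure (m₂.withDensity fun y => ENNReal.ofReal (K₂ (x, y))) :=
    stmt7_fin m₂ hk₂
  haveI fin3 : IsFiniteMeasure (m₁.withDensity fun y => ENNReal.ofReal (-K₁ (x, y))) :=
    stmt7_fin m₁ hk₁.neg
  haveI fin4 : IsFiniteMeasure (m₂.withDensity fun y => ENNReal.ofReal (-K₂ (x, y))) :=
    stmt7_fin m₂ hk₂.neg
  haveI finδ1 : IsFiniteMeasure ((ENNReal.ofReal (-a)) • Measure.dirac x) :=
    ⟨by simp [Measure.smul_apply, ENNReal.ofReal_lt_top]⟩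
  haveI finδ2 : IsFiniteMeasure ((ENNReal.ofReal a) • Measure.dirac x) :=
    ⟨by simp [Measure.smul_apply, ENNReal.ofReal_lt_top]⟩
  set μ : Measure M := m₁.withDensity (fun y => ENNReal.ofReal (K₁ (x, y)))
      + m₂.withDensity (fun y => ENNReal.ofReal (-K₂ (x, y)))
      + (ENNReal.ofReal (-a)) • Measure.dirac x with hμ
  set ν : Measure M := m₂.withDensity (fun y => ENNReal.ofReal (K₂ (x, y)))
      + m₁.withDensity (fun y => ENNReal.ofReal (-K₁ (x, y)))
      + (ENNReal.ofReal a) • Measure.dirac x with hν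
  haveI : IsFiniteMeasure μ := by rw [hμ]; infer_instance
  haveI : IsFiniteMeasure ν := by rw [hν]; infer_instance
  have key : μ = ν := by
    apply ext_of_forall_lintegral_eq_of_IsFiniteMeasure
    intro f
    have hf : Continuous fun y => (f y : ℝ) := NNReal.continuous_coe.comp f.continuous
    have hreal : ∫ y, (f y : ℝ) ∂μ = ∫ y, (f y : ℝ) ∂ν := by
      rw [hμ, hν,
        integral_add_measure (stmt7_integrable _ hf) (stmt7_integrable _ hf),
        integral_add_measure (stmt7_integrable _ hf) (stmt7_integrable _ hf),
        integral_add_measure (stmt7_integrable _ hf) (stmt7_integrable _ hf),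
        integral_add_measure (stmt7_integrable _ hf) (stmt7_integrable _ hf),
        stmt7_withDensity_integral m₁ hk₁ _, stmt7_withDensity_integral m₂ (k := fun y => -K₂ (x, y)) hk₂.neg _,
        stmt7_withDensity_integral m₂ hk₂ _, stmt7_withDensity_integral m₁ (k := fun y => -K₁ (x, y)) hk₁.neg _,
        integral_smul_measure, integral_smul_measure, integral_dirac,
        ENNReal.toReal_ofReal', ENNReal.toReal_ofReal']
      have d1 : (∫ y, max (K₁ (x, y)) 0 * (f y : ℝ) ∂m₁)
          - (∫ y, max (-K₁ (x, y)) 0 * (f y : ℝ) ∂m₁) = ∫ y, K₁ (x, y) * (f y : ℝ) ∂m₁ := by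
        rw [← integral_sub (stmt7_integrable m₁ (k := fun y => max (K₁ (x, y)) 0 * (f y : ℝ)) ((hk₁.max continuous_const).mul hf))
          (stmt7_integrable m₁ (k := fun y => max (-K₁ (x, y)) 0 * (f y : ℝ)) ((hk₁.neg.max continuous_const).mul hf))]
        refine integral_congr_ae (Filter.Eventually.of_forall fun y => ?_)
        show max (K₁ (x, y)) 0 * (f y : ℝ) - max (-K₁ (x, y)) 0 * (f y : ℝ) = K₁ (x, y) * (f y : ℝ)
        rw [← sub_mul, max_zero_sub_max_neg_zero_eq_self]
      have d2 : (∫ y, max (K₂ (x, y)) 0 * (f y : ℝ) ∂m₂)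
          - (∫ y, max (-K₂ (x, y)) 0 * (f y : ℝ) ∂m₂) = ∫ y, K₂ (x, y) * (f y : ℝ) ∂m₂ := by
        rw [← integral_sub (stmt7_integrable m₂ (k := fun y => max (K₂ (x, y)) 0 * (f y : ℝ)) ((hk₂.max continuous_const).mul hf))
          (stmt7_integrable m₂ (k := fun y => max (-K₂ (x, y)) 0 * (f y : ℝ)) ((hk₂.neg.max continuous_const).mul hf))]
        refine integral_congr_ae (Filter.Eventually.of_forall fun y => ?_)
        show max (K₂ (x, y)) 0 * (f y : ℝ) - max (-K₂ (x, y)) 0 * (f y : ℝ) = K₂ (x, y) * (f y : ℝ)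
        rw [← sub_mul, max_zero_sub_max_neg_zero_eq_self]
      have hAf : (∫ y, K₁ (x, y) * (f y : ℝ) ∂m₁) - (∫ y, K₂ (x, y) * (f y : ℝ) ∂m₂)
          = (f x : ℝ) * a := hA ⟨fun y => (f y : ℝ), hf⟩
      have hmaxa : max (-a) 0 - max a 0 = -a := by
        have := max_zero_sub_max_neg_zero_eq_self (-a)
        rwa [neg_neg] at this
      have hmaxa' : max (-a) 0 • (f x : ℝ) - max a 0 • (f x : ℝ) = -a * (f x : ℝ) := by
        rw [smul_eq_mul, smul_eq_mul, ← sub_mul, hmaxa]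
      linarith [d1, d2, hAf, hmaxa']
    have l1 : (∫⁻ y, (f y : ℝ≥0∞) ∂μ) ≠ ⊤ :=
      (BoundedContinuousFunction.lintegral_lt_top_of_nnreal μ f).ne
    have l2 : (∫⁻ y, (f y : ℝ≥0∞) ∂ν) ≠ ⊤ :=
      (BoundedContinuousFunction.lintegral_lt_top_of_nnreal ν f).ne
    refine (ENNReal.toReal_eq_toReal_iff' l1 l2).mp ?_
    rw [BoundedContinuousFunction.toReal_lintegral_coe_eq_integral,
      BoundedContinuousFunction.toReal_lintegral_coe_eq_integral]
    exact hreal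
  -- evaluate at the singleton {x} to kill the dirac coefficient difference
  have w1 : (m₁.withDensity fun y => ENNReal.ofReal (K₁ (x, y))) {x} = 0 :=
    (withDensity_absolutelyContinuous _ _) (measure_singleton x)
  have w2 : (m₂.withDensity fun y => ENNReal.ofReal (K₂ (x, y))) {x} = 0 :=
    (withDensity_absolutelyContinuous _ _) (measure_singleton x)
  have w3 : (m₁.withDensity fun y => ENNReal.ofReal (-K₁ (x, y))) {x} = 0 :=
    (withDensity_absolutelyContinuous _ _) (measure_singleton x)
  have w4 : (m₂.withDensity fun y => ENNReal.ofReal (-K₂ (x, y))) {x} = 0 :=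
    (withDensity_absolutelyContinuous _ _) (measure_singleton x)
  have hxa : ENNReal.ofReal (-a) = ENNReal.ofReal a := by
    have hh := congrArg (fun μ' : Measure M => μ' {x}) key
    simpa [hμ, hν, Measure.add_apply, Measure.smul_apply, w1, w2, w3, w4, smul_eq_mul]
      using hh
  -- conclude equality of the signed measures
  refine VectorMeasure.ext fun s hs => ?_
  rw [withDensityᵥ_apply ik₁ hs, withDensityᵥ_apply ik₂ hs,
    integral_eq_lintegral_pos_part_sub_lintegral_neg_part (ik₁.restrict),
    integral_eq_lintegral_pos_part_sub_lintegral_neg_part (ik₂.restrict)]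
  have hh := congrArg (fun μ' : Measure M => μ' s) key
  simp only [hμ, hν, Measure.add_apply, Measure.smul_apply, smul_eq_mul, hxa,
    withDensity_apply _ hs] at hh
  refine stmt7_cancel ?_ ?_ ?_ ?_ ?_ hh
  · exact (lt_of_le_of_lt (setLIntegral_le_lintegral s _) ik₁.lintegral_lt_top).ne
  · exact (lt_of_le_of_lt (setLIntegral_le_lintegral s _)
      (stmt7_integrable m₂ hk₂).lintegral_lt_top).ne
  · exact (lt_of_le_of_lt (setLIntegral_le_lintegral s _)
      (stmt7_integrable m₁ hk₁.neg).lintegral_lt_top).ne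
  · exact (lt_of_le_of_lt (setLIntegral_le_lintegral s _)
      (stmt7_integrable m₂ hk₂.neg).lintegral_lt_top).ne
  · exact ENNReal.mul_ne_top ENNReal.ofReal_ne_top (measure_ne_top _ _)
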